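/- Let Ω ⊆ ℝⁿ be open, let u, ũ : Ω → ℝ be continuously differentiable with ∇u(x) ≠ 0 and ∇ũ(x) ≠ 0 for all x ∈ Ω, and let H, H̃ : Ω → ℝ be continuously differentiable. Set v = ũ − u. Then the pointwise vector identity (H/‖∇ũ‖²) ( ∇v − (⟨∇u + ∇ũ, ∇v⟩/‖∇u‖²) ∇u ) + ((H̃ − H)/‖∇ũ‖²) ∇ũ = (H̃/‖∇ũ‖²) ∇ũ − (H/‖∇u‖²) ∇u holds on Ω. Consequently, if both div(H ‖∇u‖⁻² ∇u) = 0 and div(H̃ ‖∇ũ‖⁻² ∇ũ) = 0 on Ω, then div( (H/‖∇ũ‖²) ( I − (∇u ⊗ (∇u + ∇ũ))/‖∇u‖² ) ∇v + ((H̃ − H)/‖∇ũ‖²) ∇ũ ) = 0 on Ω, i.e., the difference v of two solutions of the 0-Laplacian satisfies a linear second-order equation with source term proportional to H̃ − H. -/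

import Mathlib

open scoped RealInnerProductSpace

/-- The divergence of a vector field on `ℝⁿ`: `div F = ∑ i ∂Fᵢ/∂xᵢ`. -/
noncomputable def pdiv {n : ℕ} (F : EuclideanSpace ℝ (Fin n) → EuclideanSpace ℝ (Fin n))
    (x : EuclideanSpace ℝ (Fin n)) : ℝ :=
  ∑ i, fderiv ℝ F x (EuclideanSpace.single i 1) i

lemma key_vector_identity {E : Type*} [NormedAddCommGroup E] [InnerProductSpace ℝ E]
    (a b : E) (H H' : ℝ) (ha : a ≠ 0) (hb : b ≠ 0) :
    (H / ‖b‖ ^ 2) • ((b - a) - (⟪a + b, b - a⟫ / ‖a‖ ^ 2) • a)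
      + ((H' - H) / ‖b‖ ^ 2) • b
    = (H' / ‖b‖ ^ 2) • b - (H / ‖a‖ ^ 2) • a := by
  have h1 : ⟪a + b, b - a⟫ = ‖b‖ ^ 2 - ‖a‖ ^ 2 := by
    simp [inner_add_left, inner_sub_right, real_inner_comm a b,
      real_inner_self_eq_norm_sq]
    ring
  have ha' : ‖a‖ ≠ 0 := norm_ne_zero_iff.mpr ha
  have hb' : ‖b‖ ≠ 0 := norm_ne_zero_iff.mpr hb
  rw [h1]
  match_scalars <;> field_simp <;> ring

/-- let `u, ut` be `C¹` with nonvanishing gradients on an open set `Ω ⊆ ℝⁿ`,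
`H, H'` be `C¹`, and `v = ut − u`.  Then the pointwise identity
`(H/‖∇ut‖²)(∇v − (⟨∇u+∇ut, ∇v⟩/‖∇u‖²)∇u) + ((H'−H)/‖∇ut‖²)∇ut = (H'/‖∇ut‖²)∇ut − (H/‖∇u‖²)∇u`
holds on `Ω`; consequently, if both `div(H ‖∇u‖⁻² ∇u) = 0` and `div(H' ‖∇ut‖⁻² ∇ut) = 0` on
`Ω` (the fields being differentiable there), then the field
`(H/‖∇ut‖²)(I − (∇u ⊗ (∇u+∇ut))/‖∇u‖²)∇v + ((H'−H)/‖∇ut‖²)∇ut` is divergence free on `Ω`. -/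
theorem difference_of_zero_laplacian_solutions_solves_linear_equation
    (n : ℕ) (hn : 2 ≤ n) (Ω : Set (EuclideanSpace ℝ (Fin n))) (hΩ : IsOpen Ω)
    (u ut H H' : EuclideanSpace ℝ (Fin n) → ℝ)
    (hu : ContDiffOn ℝ 1 u Ω) (hut : ContDiffOn ℝ 1 ut Ω)
    (hH : ContDiffOn ℝ 1 H Ω) (hH' : ContDiffOn ℝ 1 H' Ω)
    (hgu : ∀ x ∈ Ω, gradient u x ≠ 0) (hgut : ∀ x ∈ Ω, gradient ut x ≠ 0) :
    (∀ x ∈ Ω,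
      (H x / ‖gradient ut x‖ ^ 2) •
          ((gradient ut x - gradient u x)
            - (⟪gradient u x + gradient ut x, gradient ut x - gradient u x⟫ / ‖gradient u x‖ ^ 2)
                • gradient u x)
        + ((H' x - H x) / ‖gradient ut x‖ ^ 2) • gradient ut x
      = (H' x / ‖gradient ut x‖ ^ 2) • gradient ut x - (H x / ‖gradient u x‖ ^ 2) • gradient u x)
    ∧ ((∀ x ∈ Ω,
          DifferentiableAt ℝ (fun y => (H y / ‖gradient u y‖ ^ 2) • gradient u y) x ∧
          pdiv (fun y => (H y / ‖gradient u y‖ ^ 2) • gradient u y) x = 0) →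
       (∀ x ∈ Ω,
          DifferentiableAt ℝ (fun y => (H' y / ‖gradient ut y‖ ^ 2) • gradient ut y) x ∧
          pdiv (fun y => (H' y / ‖gradient ut y‖ ^ 2) • gradient ut y) x = 0) →
       ∀ x ∈ Ω,
          DifferentiableAt ℝ (fun y =>
            (H y / ‖gradient ut y‖ ^ 2) •
                ((gradient ut y - gradient u y)
                  - (⟪gradient u y + gradient ut y, gradient ut y - gradient u y⟫
                      / ‖gradient u y‖ ^ 2) • gradient u y)
              + ((H' y - H y) / ‖gradient ut y‖ ^ 2) • gradient ut y) x ∧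
          pdiv (fun y =>
            (H y / ‖gradient ut y‖ ^ 2) •
                ((gradient ut y - gradient u y)
                  - (⟪gradient u y + gradient ut y, gradient ut y - gradient u y⟫
                      / ‖gradient u y‖ ^ 2) • gradient u y)
              + ((H' y - H y) / ‖gradient ut y‖ ^ 2) • gradient ut y) x = 0) := by
  have hpt : ∀ x ∈ Ω,
      (H x / ‖gradient ut x‖ ^ 2) •
          ((gradient ut x - gradient u x)
            - (⟪gradient u x + gradient ut x, gradient ut x - gradient u x⟫ / ‖gradient u x‖ ^ 2)
                • gradient u x)
        + ((H' x - H x) / ‖gradient ut x‖ ^ 2) • gradient ut x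
      = (H' x / ‖gradient ut x‖ ^ 2) • gradient ut x
        - (H x / ‖gradient u x‖ ^ 2) • gradient u x := fun x hx =>
    key_vector_identity _ _ _ _ (hgu x hx) (hgut x hx)
  refine ⟨hpt, fun h1 h2 x hx => ?_⟩
  set Fu := fun y => (H y / ‖gradient u y‖ ^ 2) • gradient u y with hFu
  set Ft := fun y => (H' y / ‖gradient ut y‖ ^ 2) • gradient ut y with hFt
  have heq : (fun y =>
      (H y / ‖gradient ut y‖ ^ 2) •
          ((gradient ut y - gradient u y)
            - (⟪gradient u y + gradient ut y, gradient ut y - gradient u y⟫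
                / ‖gradient u y‖ ^ 2) • gradient u y)
        + ((H' y - H y) / ‖gradient ut y‖ ^ 2) • gradient ut y)
      =ᶠ[nhds x] (fun y => Ft y - Fu y) := by
    filter_upwards [hΩ.mem_nhds hx] with y hy
    exact hpt y hy
  have hdiff : DifferentiableAt ℝ (fun y => Ft y - Fu y) x :=
    (h2 x hx).1.sub (h1 x hx).1
  have hdiff' := hdiff.congr_of_eventuallyEq heq
  refine ⟨hdiff', ?_⟩
  unfold pdiv
  have hfd : fderiv ℝ (fun y =>
      (H y / ‖gradient ut y‖ ^ 2) •
          ((gradient ut y - gradient u y)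
            - (⟪gradient u y + gradient ut y, gradient ut y - gradient u y⟫
                / ‖gradient u y‖ ^ 2) • gradient u y)
        + ((H' y - H y) / ‖gradient ut y‖ ^ 2) • gradient ut y) x
      = fderiv ℝ (fun y => Ft y - Fu y) x := heq.fderiv_eq
  rw [hfd, fderiv_fun_sub (h2 x hx).1 (h1 x hx).1]
  have e1 := (h1 x hx).2
  have e2 := (h2 x hx).2
  unfold pdiv at e1 e2
  simp only [ContinuousLinearMap.sub_apply, PiLp.sub_apply, Finset.sum_sub_distrib]
  rw [e1, e2, sub_zero]
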